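/- Let s be an integer and set r = |6s+1| (so r is a positive integer coprime to 6). Let Δ = Δ(2,3,r) be the triangle group and let y = c^((r+3)/2) * a * c^(-(r+3)/2) * a be the indicated element of Δ (where a, b, c denote the images of the generators). Let G be a perfect group, let N be a subgroup of G contained in the center of G (hence normal), let m ∈ G, and suppose there is a group isomorphism φ : G/N ≃* Δ with φ(m N) = y. Then the normal closure of {m} in G is all of G, i.e., Subgroup.normalClosure {m} = ⊤. -/

import Mathlib

/-- Generators of the triangle group. -/
inductive TriGen : Type
  | a | b | c

/-- Relators of the triangle group Δ(p,q,r): aᵖ, bᵠ, cʳ, abc. -/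
def triangleRels (p q r : ℕ) : Set (FreeGroup TriGen) :=
  {FreeGroup.of TriGen.a ^ p, FreeGroup.of TriGen.b ^ q, FreeGroup.of TriGen.c ^ r,
    FreeGroup.of TriGen.a * FreeGroup.of TriGen.b * FreeGroup.of TriGen.c}

/-- The triangle group Δ(p,q,r), presented with generators a, b, c and
relators aᵖ, bᵠ, cʳ, abc. -/
abbrev TriangleGroup (p q r : ℕ) := PresentedGroup (triangleRels p q r)

/-- The image of the generator `a` in Δ(p,q,r). -/
def ta (p q r : ℕ) : TriangleGroup p q r := PresentedGroup.of TriGen.a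

/-- The image of the generator `b` in Δ(p,q,r). -/
def tb (p q r : ℕ) : TriangleGroup p q r := PresentedGroup.of TriGen.b

/-- The image of the generator `c` in Δ(p,q,r). -/
def tc (p q r : ℕ) : TriangleGroup p q r := PresentedGroup.of TriGen.c

lemma rel_one (p q r : ℕ) {w : FreeGroup TriGen} (h : w ∈ triangleRels p q r) :
    PresentedGroup.mk (triangleRels p q r) w = 1 :=
  (QuotientGroup.eq_one_iff w).2 (Subgroup.subset_normalClosure h)

lemma ta_rel (p q r : ℕ) : ta p q r ^ p = 1 := by
  have := rel_one p q r (w := FreeGroup.of TriGen.a ^ p) (by simp [triangleRels])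
  simpa [ta, PresentedGroup.of, map_pow] using this

lemma tb_rel (p q r : ℕ) : tb p q r ^ q = 1 := by
  have := rel_one p q r (w := FreeGroup.of TriGen.b ^ q) (by simp [triangleRels])
  simpa [tb, PresentedGroup.of, map_pow] using this

lemma tc_rel (p q r : ℕ) : tc p q r ^ r = 1 := by
  have := rel_one p q r (w := FreeGroup.of TriGen.c ^ r) (by simp [triangleRels])
  simpa [tc, PresentedGroup.of, map_pow] using this

lemma tabc_rel (p q r : ℕ) : ta p q r * tb p q r * tc p q r = 1 := by
  have := rel_one p q r
    (w := FreeGroup.of TriGen.a * FreeGroup.of TriGen.b * FreeGroup.of TriGen.c)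
    (by simp [triangleRels])
  simpa [ta, tb, tc, PresentedGroup.of, map_mul] using this

lemma triangle_key (r : ℕ) (hr2 : r % 2 = 1) (hr3 : r % 3 ≠ 0) :
    Subgroup.normalClosure
      {tc 2 3 r ^ ((r + 3) / 2) * ta 2 3 r * (tc 2 3 r ^ ((r + 3) / 2))⁻¹ * ta 2 3 r} = ⊤ := by
  set k : ℕ := (r + 3) / 2 with hkdef
  have hk : 2 * k = r + 3 := by omega
  set y : TriangleGroup 2 3 r :=
    tc 2 3 r ^ k * ta 2 3 r * (tc 2 3 r ^ k)⁻¹ * ta 2 3 r with hydef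
  set H : Subgroup (TriangleGroup 2 3 r) := Subgroup.normalClosure {y} with hHdef
  set π : TriangleGroup 2 3 r →* (TriangleGroup 2 3 r ⧸ H) := QuotientGroup.mk' H with hπdef
  set A := π (ta 2 3 r) with hAdef
  set B := π (tb 2 3 r) with hBdef
  set C := π (tc 2 3 r) with hCdef
  have hA2 : A ^ 2 = 1 := by rw [hAdef, ← map_pow, ta_rel, map_one]
  have hB3 : B ^ 3 = 1 := by rw [hBdef, ← map_pow, tb_rel, map_one]
  have hCr : C ^ r = 1 := by rw [hCdef, ← map_pow, tc_rel, map_one]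
  have hABC : A * B * C = 1 := by
    rw [hAdef, hBdef, hCdef, ← map_mul, ← map_mul, tabc_rel, map_one]
  have hy1 : C ^ k * A * (C ^ k)⁻¹ * A = 1 := by
    have hmem : y ∈ H := Subgroup.subset_normalClosure rfl
    have : π y = 1 := (QuotientGroup.eq_one_iff y).2 hmem
    simpa [hydef, map_mul, map_pow, map_inv, hAdef, hCdef] using this
  have hAinv : A⁻¹ = A := by
    have : A * A = 1 := by rw [← sq]; exact hA2
    exact inv_eq_of_mul_eq_one_right this
  have hCkA : Commute (C ^ k) A := by
    have h1 : C ^ k * A * (C ^ k)⁻¹ = A := by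
      have h0 := mul_eq_one_iff_eq_inv.mp hy1
      rwa [hAinv] at h0
    have h2 : C ^ k * A = A * C ^ k := mul_inv_eq_iff_eq_mul.mp h1
    exact h2
  have hC3 : C ^ 3 = C ^ (2 * k) := by
    rw [hk, pow_add, hCr, one_mul]
  have hC3A : Commute (C ^ 3) A := by
    rw [hC3, two_mul, pow_add]; exact hCkA.mul_left hCkA
  have hcop : Nat.Coprime 3 k := by
    rw [Nat.Prime.coprime_iff_not_dvd Nat.prime_three]
    intro ⟨t, ht⟩; omega
  have hbez : (1 : ℤ) = 3 * Nat.gcdA 3 k + k * Nat.gcdB 3 k := by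
    have := Nat.gcd_eq_gcd_ab 3 k
    rwa [hcop, Nat.cast_one] at this
  have hCA : Commute C A := by
    have hCeq : C = (C ^ 3) ^ Nat.gcdA 3 k * (C ^ k) ^ Nat.gcdB 3 k := by
      calc C = C ^ (1 : ℤ) := (zpow_one C).symm
        _ = C ^ ((3 : ℤ) * Nat.gcdA 3 k + (k : ℤ) * Nat.gcdB 3 k) := by rw [← hbez]
        _ = C ^ ((3 : ℤ) * Nat.gcdA 3 k) * C ^ ((k : ℤ) * Nat.gcdB 3 k) := zpow_add C _ _
        _ = (C ^ 3) ^ Nat.gcdA 3 k * (C ^ k) ^ Nat.gcdB 3 k := by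
            rw [zpow_mul, zpow_mul]; norm_cast
    rw [hCeq]
    exact (hC3A.zpow_left _).mul_left (hCkA.zpow_left _)
  have hBval : B = A⁻¹ * C⁻¹ := by
    have h1 : A * B = C⁻¹ := mul_eq_one_iff_eq_inv.mp hABC
    rw [← h1, inv_mul_cancel_left]
  have hAB : Commute A B := by
    rw [hBval]
    exact ((Commute.refl A).inv_right).mul_right hCA.symm.inv_right
  have hBC : Commute B C := by
    rw [hBval]
    exact (hCA.symm.inv_left).mul_left (Commute.refl C).inv_left
  have hABc : Commute (A * B) C := hCA.symm.mul_left hBC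
  have hpow : A ^ r * B ^ r = 1 := by
    have h1 : (A * B * C) ^ r = 1 := by rw [hABC, one_pow]
    rw [hABc.mul_pow, hAB.mul_pow, hCr, mul_one] at h1
    exact h1
  have hAr : A ^ r = A := by
    have h1 : A ^ r = A ^ (2 * (r / 2) + 1) := by congr 1; omega
    rw [h1, pow_add, pow_mul, hA2, one_pow, one_mul, pow_one]
  have hBr : B ^ r = B ^ (r % 3) := by
    have h1 : B ^ r = B ^ (3 * (r / 3) + r % 3) := by congr 1; omega
    rw [h1, pow_add, pow_mul, hB3, one_pow, one_mul]
  rw [hAr, hBr] at hpow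
  have hB1 : B = 1 := by
    rcases (by omega : r % 3 = 1 ∨ r % 3 = 2) with h | h
    · rw [h, pow_one] at hpow
      have hA : A = B⁻¹ := eq_inv_of_mul_eq_one_left hpow
      have hB2 : B ^ 2 = 1 := by
        have := hA2
        rw [hA, inv_pow, inv_eq_one] at this
        exact this
      calc B = B ^ 3 * (B ^ 2)⁻¹ := by group
        _ = 1 := by rw [hB3, hB2]; simp
    · rw [h] at hpow
      have hA : A = (B ^ 2)⁻¹ := eq_inv_of_mul_eq_one_left hpow
      have hB4 : B ^ 4 = 1 := by
        have := hA2
        rw [hA, inv_pow, inv_eq_one, ← pow_mul] at this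
        exact this
      calc B = B ^ 4 * (B ^ 3)⁻¹ := by group
        _ = 1 := by rw [hB3, hB4]; simp
  have hA1 : A = 1 := by
    rcases (by omega : r % 3 = 1 ∨ r % 3 = 2) with h | h <;>
      rw [h] at hpow <;> simpa [hB1] using hpow
  have hC1 : C = 1 := by
    have := hABC
    rw [hA1, hB1, one_mul, one_mul] at this
    exact this
  rw [Subgroup.eq_top_iff']
  intro x
  refine PresentedGroup.generated_by _ H ?_ x
  intro j
  have : ∀ g : TriangleGroup 2 3 r, π g = 1 → g ∈ H := by
    intro g hg
    exact (QuotientGroup.eq_one_iff g).1 hg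
  cases j
  · exact this _ hA1
  · exact this _ hB1
  · exact this _ hC1

/-- If G is a perfect group, N a central subgroup, and m ∈ G maps to the element
y = c^((r+3)/2) * a * c^(-(r+3)/2) * a of Δ(2,3,|6s+1|) under an isomorphism
G/N ≃* Δ(2,3,|6s+1|), then m normally generates G. -/
theorem normally_generates_of_central_extension_of_triangle_group
    (s : ℤ) (G : Type*) [Group G]
    (hG : ⁅(⊤ : Subgroup G), (⊤ : Subgroup G)⁆ = ⊤)
    (N : Subgroup G) (hN : N ≤ Subgroup.center G) [N.Normal]
    (m : G)
    (φ : (G ⧸ N) ≃* TriangleGroup 2 3 (6 * s + 1).natAbs)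
    (hφ : φ (QuotientGroup.mk m) =
      tc 2 3 (6 * s + 1).natAbs ^ (((6 * s + 1).natAbs + 3) / 2) *
        ta 2 3 (6 * s + 1).natAbs *
        (tc 2 3 (6 * s + 1).natAbs ^ (((6 * s + 1).natAbs + 3) / 2))⁻¹ *
        ta 2 3 (6 * s + 1).natAbs) :
    Subgroup.normalClosure {m} = ⊤ := by
  have hr2 : (6 * s + 1).natAbs % 2 = 1 := by omega
  have hr3 : (6 * s + 1).natAbs % 3 ≠ 0 := by omega
  set HG : Subgroup G := Subgroup.normalClosure {m} with hHGdef
  set ψ : G →* TriangleGroup 2 3 (6 * s + 1).natAbs :=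
    φ.toMonoidHom.comp (QuotientGroup.mk' N) with hψdef
  have hψs : Function.Surjective ψ := φ.surjective.comp (QuotientGroup.mk'_surjective N)
  have hmap : Subgroup.map ψ HG = ⊤ := by
    rw [hHGdef, Subgroup.map_normalClosure _ _ hψs, Set.image_singleton]
    have hψm : ψ m = tc 2 3 (6 * s + 1).natAbs ^ (((6 * s + 1).natAbs + 3) / 2) *
        ta 2 3 (6 * s + 1).natAbs *
        (tc 2 3 (6 * s + 1).natAbs ^ (((6 * s + 1).natAbs + 3) / 2))⁻¹ *
        ta 2 3 (6 * s + 1).natAbs := hφ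
    rw [hψm]
    exact triangle_key _ hr2 hr3
  have hsup : ∀ g : G, ∃ h ∈ HG, ∃ n ∈ N, g = h * n := by
    intro g
    have hg : ψ g ∈ Subgroup.map ψ HG := by rw [hmap]; trivial
    obtain ⟨h, hh, hψh⟩ := hg
    refine ⟨h, hh, h⁻¹ * g, ?_, by group⟩
    have h1 : ψ (h⁻¹ * g) = 1 := by rw [map_mul, map_inv, hψh]; group
    have h2 : φ (QuotientGroup.mk (h⁻¹ * g)) = 1 := h1
    have h3 : (QuotientGroup.mk (h⁻¹ * g) : G ⧸ N) = 1 := by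
      apply φ.injective; rw [h2, map_one]
    exact (QuotientGroup.eq_one_iff _).1 h3
  have htop : (⊤ : Subgroup G) ≤ HG := by
    rw [← hG]
    refine Subgroup.commutator_le.mpr ?_
    intro g1 _ g2 _
    obtain ⟨h1, hh1, n1, hn1, rfl⟩ := hsup g1
    obtain ⟨h2, hh2, n2, hn2, rfl⟩ := hsup g2
    open scoped commutatorElement in
    have hone : (QuotientGroup.mk' HG) ⁅h1 * n1, h2 * n2⁆ = 1 := by
      rw [map_commutatorElement, map_mul, map_mul]
      have e1 : (QuotientGroup.mk' HG) h1 = 1 := (QuotientGroup.eq_one_iff h1).2 hh1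
      have e2 : (QuotientGroup.mk' HG) h2 = 1 := (QuotientGroup.eq_one_iff h2).2 hh2
      rw [e1, e2, one_mul, one_mul]
      have hc : Commute n1 n2 := Subgroup.mem_center_iff.mp (hN hn2) n1
      exact commutatorElement_eq_one_iff_commute.2 (hc.map (QuotientGroup.mk' HG))
    exact (QuotientGroup.eq_one_iff _).mp hone
  exact top_le_iff.mp htop
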